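/- arXiv:2502.01416 — 2 statements merged into one kernel-verified Lean document; each statement's English description precedes it below -/
import Mathlib

section
/- Let X be a nonempty finite set and N ≥ 1. Let p_0 and p_1 be probability mass functions on X with full support, and let q^ref be a Markov process on X^{N+2} with full support. Suppose q* is a process on X^{N+2} such that: (i) the marginal of q* at time 0 is p_0 and the marginal at time 1 is p_1; (ii) q* is Markov; (iii) q* is reciprocal with respect to q^ref. Then q* is the unique minimizer of KL(q || q^ref) over all processes q ∈ Π_N(p_0, p_1). -/
open Finset

/-- A probability mass function on a finite type. -/
def IsPMF {Z : Type*} [Fintype Z] (p : Z → ℝ) : Prop :=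
  (∀ z, 0 ≤ p z) ∧ ∑ z, p z = 1

/-- KL divergence between two pmfs on a finite type (with `0 log 0 := 0`,
which is automatic since `0 * log (0/b) = 0`). -/
noncomputable def KLd {Z : Type*} [Fintype Z] (a b : Z → ℝ) : ℝ :=
  ∑ z, a z * Real.log (a z / b z)

/-- Trajectories with `N` intermediate time steps: indices `0, 1, …, N+1`,
where index `0` is time `0` and index `N+1` is time `1`. -/
abbrev Traj (X : Type*) (N : ℕ) := Fin (N + 2) → X

variable {X : Type*} [Fintype X] [DecidableEq X] {N : ℕ}

/-- One-time marginal of a process at time index `i`. -/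
noncomputable def timeMarg (q : Traj X N → ℝ) (i : Fin (N + 2)) (x : X) : ℝ :=
  ∑ ω : Traj X N, if ω i = x then q ω else 0

/-- Joint marginal of the endpoints `(x_0, x_1)`. -/
noncomputable def endMarg (q : Traj X N → ℝ) (a b : X) : ℝ :=
  ∑ ω : Traj X N, if ω 0 = a ∧ ω (Fin.last (N + 1)) = b then q ω else 0

/-- Joint marginal at the neighboring time indices `n` and `n+1`. -/
noncomputable def pairMarg (q : Traj X N → ℝ) (n : Fin (N + 1)) (y z : X) : ℝ :=
  ∑ ω : Traj X N, if ω n.castSucc = y ∧ ω n.succ = z then q ω else 0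

/-- Transition probability `q(x_{t_n} = z | x_{t_{n-1}} = y)` for the step from
time index `n` to `n+1`. -/
noncomputable def transP (q : Traj X N → ℝ) (n : Fin (N + 1)) (y z : X) : ℝ :=
  pairMarg q n y z / timeMarg q n.castSucc y

/-- Glue endpoints `a`, `b` and inner states `v` into a trajectory. -/
def glue (a : X) (v : Fin N → X) (b : X) : Traj X N :=
  Fin.cons a (Fin.snoc v b)

/-- The bridge `q(x_in | x_0 = a, x_1 = b)`, as a function of the inner states. -/
noncomputable def bridge (q : Traj X N → ℝ) (a b : X) (v : Fin N → X) : ℝ :=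
  q (glue a v b) / endMarg q a b

/-- A process is Markov if it factorizes through its one-step transitions. -/
def IsMarkov (q : Traj X N → ℝ) : Prop :=
  ∀ ω : Traj X N,
    q ω = timeMarg q 0 (ω 0) * ∏ n : Fin (N + 1), transP q n (ω n.castSucc) (ω n.succ)

/-- A process `q` is reciprocal w.r.t. a full-support reference process `qref` if its
bridges coincide with those of `qref` wherever they are defined. -/
def IsReciprocal (qref q : Traj X N → ℝ) : Prop :=
  ∀ a b : X, 0 < endMarg q a b → ∀ v : Fin N → X, bridge q a b v = bridge qref a b v

/-- Reciprocal projection of `q` w.r.t. `qref`: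
`proj_R(q)(x_0, x_in, x_1) = qref(x_in | x_0, x_1) · q(x_0, x_1)`. -/
noncomputable def projR (qref q : Traj X N → ℝ) (ω : Traj X N) : ℝ :=
  (qref ω / endMarg qref (ω 0) (ω (Fin.last (N + 1)))) *
    endMarg q (ω 0) (ω (Fin.last (N + 1)))

/-- Markovian projection of `q`:
`proj_M(q)(x_0, x_in, x_1) = q(x_0) ∏_{n=1}^{N+1} q(x_{t_n} | x_{t_{n-1}})`. -/
noncomputable def projM (q : Traj X N → ℝ) (ω : Traj X N) : ℝ :=
  timeMarg q 0 (ω 0) * ∏ n : Fin (N + 1), transP q n (ω n.castSucc) (ω n.succ)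

/-- Marginal of the bridge of `q` at time index `i`:
`q(x_{t_i} = y | x_0 = a, x_1 = b)`. -/
noncomputable def bridgeAt (q : Traj X N → ℝ) (i : Fin (N + 2)) (y a b : X) : ℝ :=
  (∑ ω : Traj X N, if ω 0 = a ∧ ω i = y ∧ ω (Fin.last (N + 1)) = b then q ω else 0) /
    endMarg q a b

/-- Conditional transition given the terminal point:
`q(x_{t_n} = z | x_{t_{n-1}} = y, x_1 = b)` for the step from time index `n` to `n+1`. -/
noncomputable def condTrans (q : Traj X N → ℝ) (n : Fin (N + 1)) (y z b : X) : ℝ :=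
  (∑ ω : Traj X N,
      if ω n.castSucc = y ∧ ω n.succ = z ∧ ω (Fin.last (N + 1)) = b then q ω else 0) /
    (∑ ω : Traj X N, if ω n.castSucc = y ∧ ω (Fin.last (N + 1)) = b then q ω else 0)

/-- Membership in `Π_N(p_0, p_1)`: a process with prescribed marginals at times 0 and 1. -/
def InPiN (p0 p1 : X → ℝ) (q : Traj X N → ℝ) : Prop :=
  IsPMF q ∧ (∀ x, timeMarg q 0 x = p0 x) ∧ (∀ x, timeMarg q (Fin.last (N + 1)) x = p1 x)

/-- Membership in `Π(p_0, p_1)`: couplings on `X²` with prescribed marginals. -/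
def InPi2 (p0 p1 : X → ℝ) (s : X × X → ℝ) : Prop :=
  IsPMF s ∧ (∀ a, ∑ b, s (a, b) = p0 a) ∧ (∀ b, ∑ a, s (a, b) = p1 b)

set_option linter.unusedSectionVars false

-- ==== auxiliary lemmas ====
section SBAux

lemma glue_zero (a : X) (v : Fin N → X) (b : X) : glue a v b 0 = a := rfl

lemma glue_last (a : X) (v : Fin N → X) (b : X) :
    glue a v b (Fin.last (N + 1)) = b := by
  have h : glue a v b ((Fin.last N).succ) = b := by
    simp only [glue, Fin.cons_succ, Fin.snoc_last]
  rwa [Fin.succ_last] at h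

lemma glue_recon (ω : Traj X N) :
    glue (ω 0) (Fin.init (Fin.tail ω)) (ω (Fin.last (N + 1))) = ω := by
  have h1 : ω (Fin.last (N + 1)) = Fin.tail ω (Fin.last N) := by
    simp [Fin.tail, Fin.succ_last]
  rw [h1]
  unfold glue
  rw [Fin.snoc_init_self, Fin.cons_self_tail]

lemma glue_agree_ne_last (a : X) (v : Fin N → X) (b b' : X) {i : Fin (N + 2)}
    (hi : i ≠ Fin.last (N + 1)) : glue a v b i = glue a v b' i := by
  induction i using Fin.cases with
  | zero => rfl
  | succ k =>
    have hk : k ≠ Fin.last N := by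
      intro h; exact hi (by rw [h, Fin.succ_last])
    rcases (Fin.eq_castSucc_or_eq_last k).resolve_right hk with ⟨m, rfl⟩
    simp [glue]

lemma glue_agree_ne_zero (a a' : X) (v : Fin N → X) (b : X) {i : Fin (N + 2)}
    (hi : i ≠ 0) : glue a v b i = glue a' v b i := by
  rcases (Fin.eq_zero_or_eq_succ i).resolve_left hi with ⟨k, rfl⟩
  simp [glue]

lemma le_timeMarg {q : Traj X N → ℝ} (hq : ∀ ω, 0 ≤ q ω) (ω : Traj X N) (i : Fin (N + 2)) :
    q ω ≤ timeMarg q i (ω i) := by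
  have := Finset.single_le_sum (f := fun σ : Traj X N => if σ i = ω i then q σ else 0)
    (fun σ _ => by split <;> simp [hq σ]) (Finset.mem_univ ω)
  simpa [timeMarg] using this

lemma le_pairMarg {q : Traj X N → ℝ} (hq : ∀ ω, 0 ≤ q ω) (ω : Traj X N) (n : Fin (N + 1)) :
    q ω ≤ pairMarg q n (ω n.castSucc) (ω n.succ) := by
  have := Finset.single_le_sum
    (f := fun σ : Traj X N => if σ n.castSucc = ω n.castSucc ∧ σ n.succ = ω n.succ then q σ else 0)
    (fun σ _ => by split <;> simp [hq σ]) (Finset.mem_univ ω)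
  simpa [pairMarg] using this

lemma le_endMarg {q : Traj X N → ℝ} (hq : ∀ ω, 0 ≤ q ω) (ω : Traj X N) :
    q ω ≤ endMarg q (ω 0) (ω (Fin.last (N + 1))) := by
  have := Finset.single_le_sum
    (f := fun σ : Traj X N =>
      if σ 0 = ω 0 ∧ σ (Fin.last (N + 1)) = ω (Fin.last (N + 1)) then q σ else 0)
    (fun σ _ => by split <;> simp [hq σ]) (Finset.mem_univ ω)
  simpa [endMarg] using this

lemma transP_pos {q : Traj X N → ℝ} (hq : ∀ ω, 0 ≤ q ω) {σ : Traj X N} (hσ : 0 < q σ)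
    (n : Fin (N + 1)) : 0 < transP q n (σ n.castSucc) (σ n.succ) :=
  div_pos (lt_of_lt_of_le hσ (le_pairMarg hq σ n))
    (lt_of_lt_of_le hσ (le_timeMarg hq σ n.castSucc))

lemma exists_pos_of_timeMarg_pos {q : Traj X N → ℝ} (hq : ∀ ω, 0 ≤ q ω) {i : Fin (N + 2)}
    {x : X} (h : 0 < timeMarg q i x) : ∃ ω : Traj X N, ω i = x ∧ 0 < q ω := by
  by_contra hc
  push_neg at hc
  have h0 : timeMarg q i x = 0 := Finset.sum_eq_zero fun ω _ => by
    by_cases h' : ω i = x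
    · simp [h', le_antisymm (hc ω h') (hq ω)]
    · simp [h']
  rw [h0] at h; exact lt_irrefl _ h

lemma sum_mul_comp (q : Traj X N → ℝ) (i : Fin (N + 2)) (L : X → ℝ) :
    ∑ ω : Traj X N, q ω * L (ω i) = ∑ x, timeMarg q i x * L x := by
  symm
  calc ∑ x, timeMarg q i x * L x
      = ∑ x, ∑ ω : Traj X N, (if ω i = x then q ω else 0) * L x := by
        simp [timeMarg, Finset.sum_mul]
    _ = ∑ ω : Traj X N, ∑ x, (if ω i = x then q ω else 0) * L x := Finset.sum_comm
    _ = ∑ ω : Traj X N, q ω * L (ω i) := by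
        refine Finset.sum_congr rfl fun ω _ => ?_
        simp [ite_mul, Finset.sum_ite_eq]

lemma constglue_castSucc (a y b : X) (n : Fin (N + 1)) :
    glue a (fun _ => y) b n.castSucc = if n = 0 then a else y := by
  rcases Fin.eq_zero_or_eq_succ n with rfl | ⟨m, rfl⟩
  · simp [glue]
  · rw [← Fin.succ_castSucc]
    simp [glue, Fin.succ_ne_zero]

lemma constglue_succ (a y b : X) (n : Fin (N + 1)) :
    glue a (fun _ => y) b n.succ = if n = Fin.last N then b else y := by
  rcases Fin.eq_castSucc_or_eq_last n with ⟨m, rfl⟩ | rfl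
  · simp [glue, (Fin.castSucc_lt_last m).ne]
  · rw [Fin.succ_last]
    simp [glue_last]

lemma markov_swap (hN : 1 ≤ N) {q : Traj X N → ℝ} (hM : IsMarkov q) (y a b a' b' : X) :
    q (glue a (fun _ => y) b) * q (glue a' (fun _ => y) b') =
      q (glue a (fun _ => y) b') * q (glue a' (fun _ => y) b) := by
  have hlast0 : (Fin.last N : Fin (N + 1)) ≠ 0 := by
    simp [Fin.ext_iff]; omega
  have key : ∀ c d c' d' : X,
      (∏ n : Fin (N + 1), transP q n (glue c (fun _ => y) d n.castSucc)
          (glue c (fun _ => y) d n.succ)) *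
      (∏ n : Fin (N + 1), transP q n (glue c' (fun _ => y) d' n.castSucc)
          (glue c' (fun _ => y) d' n.succ)) =
      ∏ n : Fin (N + 1),
        (transP q n (if n = 0 then c else y) (if n = Fin.last N then d else y) *
         transP q n (if n = 0 then c' else y) (if n = Fin.last N then d' else y)) := by
    intro c d c' d'
    rw [← Finset.prod_mul_distrib]
    refine Finset.prod_congr rfl fun n _ => ?_
    rw [constglue_castSucc, constglue_succ, constglue_castSucc, constglue_succ]
  have hswap : (∏ n : Fin (N + 1),
        (transP q n (if n = 0 then a else y) (if n = Fin.last N then b else y) *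
         transP q n (if n = 0 then a' else y) (if n = Fin.last N then b' else y))) =
      ∏ n : Fin (N + 1),
        (transP q n (if n = 0 then a else y) (if n = Fin.last N then b' else y) *
         transP q n (if n = 0 then a' else y) (if n = Fin.last N then b else y)) := by
    refine Finset.prod_congr rfl fun n _ => ?_
    by_cases hl : n = Fin.last N
    · have hn0 : n ≠ 0 := by rw [hl]; exact hlast0
      subst hl
      simp only [if_neg hlast0, if_true, eq_self_iff_true, if_pos]
      ring
    · simp [hl]
  rw [hM (glue a (fun _ => y) b), hM (glue a' (fun _ => y) b'),
    hM (glue a (fun _ => y) b'), hM (glue a' (fun _ => y) b)]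
  simp only [glue_zero]
  have h1 := key a b a' b'
  have h2 := key a b' a' b
  rw [hswap] at h1
  have h3 := h1.trans h2.symm
  linear_combination (timeMarg q 0 a * timeMarg q 0 a') * h3

lemma gibbs {Z : Type*} [Fintype Z] {a b : Z → ℝ} (ha : IsPMF a) (hb : IsPMF b)
    (hbpos : ∀ z, 0 < b z) : 0 ≤ KLd a b ∧ (KLd a b = 0 → a = b) := by
  have key : ∀ z, a z - b z ≤ a z * Real.log (a z / b z) := by
    intro z
    rcases (ha.1 z).eq_or_lt with h0 | h0
    · rw [← h0]; simp; linarith [(hbpos z).le]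
    · have hlog := Real.log_le_sub_one_of_pos (div_pos (hbpos z) h0)
      have hinv : Real.log (a z / b z) = -Real.log (b z / a z) := by
        rw [← Real.log_inv, inv_div]
      have h3 : a z * (b z / a z) = b z := by field_simp
      rw [hinv]
      nlinarith [mul_le_mul_of_nonneg_left hlog h0.le]
  have hsum : (0 : ℝ) ≤ KLd a b := by
    have h1 : ∑ z, (a z - b z) ≤ ∑ z, a z * Real.log (a z / b z) :=
      Finset.sum_le_sum fun z _ => key z
    rw [Finset.sum_sub_distrib, ha.2, hb.2] at h1
    simpa [KLd] using h1
  refine ⟨hsum, fun heq => ?_⟩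
  have hF : ∀ z, a z * Real.log (a z / b z) - (a z - b z) = 0 := by
    have h0 : ∑ z, (a z * Real.log (a z / b z) - (a z - b z)) = 0 := by
      rw [Finset.sum_sub_distrib, Finset.sum_sub_distrib, ha.2, hb.2]
      simpa [KLd] using heq
    intro z
    exact (Finset.sum_eq_zero_iff_of_nonneg fun z _ => by linarith [key z]).mp h0 z
      (Finset.mem_univ z)
  funext z
  have hz := hF z
  rcases (ha.1 z).eq_or_lt with h0 | h0
  · rw [← h0] at hz; simp at hz; exact absurd hz.symm (hbpos z).ne
  · by_contra hne
    have hd : b z / a z ≠ 1 := by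
      intro h1
      rw [div_eq_iff h0.ne', one_mul] at h1
      exact hne h1.symm
    have hlog := Real.log_lt_sub_one_of_pos (div_pos (hbpos z) h0) hd
    have hinv : Real.log (a z / b z) = -Real.log (b z / a z) := by
      rw [← Real.log_inv, inv_div]
    have h3 : a z * (b z / a z) = b z := by field_simp
    rw [hinv] at hz
    nlinarith [mul_lt_mul_of_pos_left hlog h0]

end SBAux


/-- Characterization of the dynamic SB solution on a discrete space
with a Markovian reference. If `q*` has marginals `p_0`, `p_1` at times 0 and 1 and is
both Markov and reciprocal w.r.t. the full-support Markov reference `q^ref`, then `q*`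
is the unique minimizer of `KL(q ‖ q^ref)` over `Π_N(p_0, p_1)`. -/
theorem sb_characterization
    {X : Type*} [Fintype X] [DecidableEq X] [Nonempty X] {N : ℕ} (hN : 1 ≤ N)
    (p0 p1 : X → ℝ) (hp0 : IsPMF p0) (hp0pos : ∀ x, 0 < p0 x)
    (hp1 : IsPMF p1) (hp1pos : ∀ x, 0 < p1 x)
    (qref : Traj X N → ℝ) (hqref : IsPMF qref) (hqrefpos : ∀ ω, 0 < qref ω)
    (hqrefM : IsMarkov qref)
    (qs : Traj X N → ℝ) (hqs : IsPMF qs)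
    (hqs0 : ∀ x, timeMarg qs 0 x = p0 x)
    (hqs1 : ∀ x, timeMarg qs (Fin.last (N + 1)) x = p1 x)
    (hqsM : IsMarkov qs) (hqsR : IsReciprocal qref qs) :
    (∀ q : Traj X N → ℝ, InPiN p0 p1 q → KLd qs qref ≤ KLd q qref) ∧
    (∀ q : Traj X N → ℝ, InPiN p0 p1 q → KLd q qref = KLd qs qref → q = qs) := by
  classical
  obtain ⟨hqs_nn, hqs_sum⟩ := hqs
  have hqref_nn : ∀ ω, 0 ≤ qref ω := fun ω => (hqrefpos ω).le
  have y : X := Classical.arbitrary X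
  -- spreading of support along bridges
  have spread : ∀ a b : X, 0 < endMarg qs a b → ∀ v : Fin N → X, 0 < qs (glue a v b) := by
    intro a b hE v
    have hEr : 0 < endMarg qref a b := by
      have h := le_endMarg hqref_nn (glue a v b)
      rw [glue_zero, glue_last] at h
      exact lt_of_lt_of_le (hqrefpos _) h
    have hb := hqsR a b hE v
    unfold bridge at hb
    have h2 : qs (glue a v b) = qref (glue a v b) / endMarg qref a b * endMarg qs a b := by
      rw [← hb, div_mul_cancel₀ _ hE.ne']
    rw [h2]
    exact mul_pos (div_pos (hqrefpos _) hEr) hE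
  -- full support of qs
  have hqs_pos : ∀ ω, 0 < qs ω := by
    intro ω
    rw [← glue_recon ω]
    set a := ω 0 with ha
    set b := ω (Fin.last (N + 1)) with hbdef
    set v := Fin.init (Fin.tail ω) with hv
    have h1 : 0 < timeMarg qs 0 a := by rw [hqs0]; exact hp0pos a
    obtain ⟨ω₁, hω₁, hω₁pos⟩ := exists_pos_of_timeMarg_pos hqs_nn h1
    have hE1 : 0 < endMarg qs a (ω₁ (Fin.last (N + 1))) := by
      have h := le_endMarg hqs_nn ω₁
      rw [hω₁] at h
      exact lt_of_lt_of_le hω₁pos h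
    have hP1 := spread a _ hE1
    have h2 : 0 < timeMarg qs (Fin.last (N + 1)) b := by rw [hqs1]; exact hp1pos b
    obtain ⟨ω₂, hω₂, hω₂pos⟩ := exists_pos_of_timeMarg_pos hqs_nn h2
    have hE2 : 0 < endMarg qs (ω₂ 0) b := by
      have h := le_endMarg hqs_nn ω₂
      rw [hω₂] at h
      exact lt_of_lt_of_le hω₂pos h
    have hP2 := spread _ b hE2
    rw [hqsM (glue a v b)]
    apply mul_pos
    · rw [glue_zero]; exact h1
    · apply Finset.prod_pos
      intro n _
      by_cases hl : n = Fin.last N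
      · subst hl
        have hc0 : (Fin.last N).castSucc ≠ (0 : Fin (N + 2)) := by
          simp [Fin.ext_iff]; omega
        have hs0 : (Fin.last N).succ ≠ (0 : Fin (N + 2)) := Fin.succ_ne_zero _
        rw [glue_agree_ne_zero a (ω₂ 0) v b hc0, glue_agree_ne_zero a (ω₂ 0) v b hs0]
        exact transP_pos hqs_nn (hP2 v) _
      · have hc : n.castSucc ≠ Fin.last (N + 1) := (Fin.castSucc_lt_last n).ne
        have hs : n.succ ≠ Fin.last (N + 1) := by
          intro h
          exact hl (Fin.succ_injective _ (h.trans (Fin.succ_last N).symm))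
        rw [glue_agree_ne_last a v b (ω₁ (Fin.last (N + 1))) hc,
            glue_agree_ne_last a v b (ω₁ (Fin.last (N + 1))) hs]
        exact transP_pos hqs_nn (hP1 v) _
  -- endpoint marginals are everywhere positive
  have hEs : ∀ a b : X, 0 < endMarg qs a b := by
    intro a b
    have h := le_endMarg hqs_nn (glue a (fun _ => y) b)
    rw [glue_zero, glue_last] at h
    exact lt_of_lt_of_le (hqs_pos _) h
  have hEr : ∀ a b : X, 0 < endMarg qref a b := by
    intro a b
    have h := le_endMarg hqref_nn (glue a (fun _ => y) b)
    rw [glue_zero, glue_last] at h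
    exact lt_of_lt_of_le (hqrefpos _) h
  -- qs = (endMarg ratio) * qref
  have hglue : ∀ (a b : X) (v : Fin N → X),
      qs (glue a v b) = endMarg qs a b / endMarg qref a b * qref (glue a v b) := by
    intro a b v
    have hb := hqsR a b (hEs a b) v
    unfold bridge at hb
    rw [div_eq_div_iff (hEs a b).ne' (hEr a b).ne'] at hb
    rw [div_mul_eq_mul_div, eq_div_iff (hEr a b).ne']
    linear_combination hb
  have hqs_eq : ∀ ω : Traj X N, qs ω =
      endMarg qs (ω 0) (ω (Fin.last (N + 1))) / endMarg qref (ω 0) (ω (Fin.last (N + 1))) *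
        qref ω := by
    intro ω
    have h := hglue (ω 0) (ω (Fin.last (N + 1))) (Fin.init (Fin.tail ω))
    rwa [glue_recon ω] at h
  -- the ratio factorizes
  have hswapH : ∀ a b a' b' : X,
      (endMarg qs a b / endMarg qref a b) * (endMarg qs a' b' / endMarg qref a' b') =
      (endMarg qs a b' / endMarg qref a b') * (endMarg qs a' b / endMarg qref a' b) := by
    intro a b a' b'
    have hs := markov_swap hN hqsM y a b a' b'
    have hr := markov_swap hN hqrefM y a b a' b'
    have e : ∀ c d : X, qs (glue c (fun _ => y) d) =
        endMarg qs c d / endMarg qref c d * qref (glue c (fun _ => y) d) := fun c d => by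
      have h := hqs_eq (glue c (fun _ => y) d)
      rwa [glue_zero, glue_last] at h
    rw [e, e, e, e] at hs
    have hRne : qref (glue a (fun _ => y) b) * qref (glue a' (fun _ => y) b') ≠ 0 :=
      (mul_pos (hqrefpos _) (hqrefpos _)).ne'
    apply mul_right_cancel₀ hRne
    linear_combination hs -
      (endMarg qs a b' / endMarg qref a b' * (endMarg qs a' b / endMarg qref a' b)) * hr
  obtain ⟨f, g, fpos, gpos, hfgh⟩ :
      ∃ f g : X → ℝ, (∀ a, 0 < f a) ∧ (∀ b, 0 < g b) ∧
        ∀ a b, endMarg qs a b / endMarg qref a b = f a * g b := by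
    refine ⟨fun a => endMarg qs a y / endMarg qref a y,
      fun b => (endMarg qs y b / endMarg qref y b) / (endMarg qs y y / endMarg qref y y),
      fun a => div_pos (hEs a y) (hEr a y),
      fun b => div_pos (div_pos (hEs y b) (hEr y b)) (div_pos (hEs y y) (hEr y y)), ?_⟩
    intro a b
    have hyy : (0 : ℝ) < endMarg qs y y / endMarg qref y y := div_pos (hEs y y) (hEr y y)
    rw [← mul_div_assoc, eq_div_iff hyy.ne']
    exact hswapH a b y y
  have hqs_fg : ∀ ω : Traj X N, qs ω = f (ω 0) * g (ω (Fin.last (N + 1))) * qref ω := by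
    intro ω
    rw [hqs_eq ω, hfgh]
  -- the Pythagorean decomposition
  set C : ℝ := (∑ a, p0 a * Real.log (f a)) + (∑ b, p1 b * Real.log (g b)) with hCdef
  have key : ∀ q : Traj X N → ℝ, InPiN p0 p1 q → KLd q qref = KLd q qs + C := by
    rintro q ⟨⟨hq_nn, -⟩, hq0, hq1⟩
    have hterm : ∀ ω : Traj X N, q ω * Real.log (q ω / qref ω) =
        q ω * Real.log (q ω / qs ω) +
        (q ω * Real.log (f (ω 0)) + q ω * Real.log (g (ω (Fin.last (N + 1))))) := by
      intro ω
      rcases (hq_nn ω).eq_or_lt with h0 | h0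
      · rw [← h0]; simp
      · have hfg1 : Real.log (qs ω) =
            Real.log (f (ω 0)) + Real.log (g (ω (Fin.last (N + 1)))) + Real.log (qref ω) := by
          rw [hqs_fg ω, Real.log_mul (mul_pos (fpos _) (gpos _)).ne' (hqrefpos ω).ne',
            Real.log_mul (fpos _).ne' (gpos _).ne']
        rw [Real.log_div h0.ne' (hqrefpos ω).ne', Real.log_div h0.ne' (hqs_pos ω).ne']
        linear_combination (q ω) * hfg1
    show (∑ ω : Traj X N, q ω * Real.log (q ω / qref ω)) = _
    calc (∑ ω : Traj X N, q ω * Real.log (q ω / qref ω))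
        = ∑ ω : Traj X N, (q ω * Real.log (q ω / qs ω) +
            (q ω * Real.log (f (ω 0)) + q ω * Real.log (g (ω (Fin.last (N + 1)))))) :=
          Finset.sum_congr rfl fun ω _ => hterm ω
      _ = (∑ ω : Traj X N, q ω * Real.log (q ω / qs ω)) +
          ((∑ ω : Traj X N, q ω * Real.log (f (ω 0))) +
           (∑ ω : Traj X N, q ω * Real.log (g (ω (Fin.last (N + 1)))))) := by
          rw [Finset.sum_add_distrib, Finset.sum_add_distrib]
      _ = KLd q qs + C := by
          rw [sum_mul_comp q 0 (fun x => Real.log (f x)),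
            sum_mul_comp q (Fin.last (N + 1)) (fun x => Real.log (g x)), hCdef]
          congr 1
          congr 1
          · exact Finset.sum_congr rfl fun x _ => by rw [hq0 x]
          · exact Finset.sum_congr rfl fun x _ => by rw [hq1 x]
  have hKqsqs : KLd qs qs = 0 := by
    unfold KLd
    exact Finset.sum_eq_zero fun ω _ => by
      rw [div_self (hqs_pos ω).ne', Real.log_one, mul_zero]
  have hqsC : KLd qs qref = C := by
    have hk := key qs ⟨⟨hqs_nn, hqs_sum⟩, hqs0, hqs1⟩
    rw [hKqsqs, zero_add] at hk
    exact hk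
  constructor
  · intro q hq
    have hk := key q hq
    have hg := (gibbs hq.1 ⟨hqs_nn, hqs_sum⟩ hqs_pos).1
    linarith
  · intro q hq heq
    have hk := key q hq
    have h0 : KLd q qs = 0 := by linarith
    exact (gibbs hq.1 ⟨hqs_nn, hqs_sum⟩ hqs_pos).2 h0
end

section
/- Let X be a nonempty finite set, N ≥ 1, and let q^ref be a Markov process on X^{N+2} with full support. Let q be a process on X^{N+2} that is reciprocal with respect to q^ref and whose endpoint coupling q(x_0, x_1) has full support on X² (so q has full support on X^{N+2}). Define, for each Markov process m on X^{N+2} with full-support transition probabilities, L(m) := E_{q(x_0,x_1)} [ Σ_{n=1}^{N} E_{q^ref(x_{t_{n-1}} | x_0, x_1)} KL( q^ref(x_{t_n} | x_{t_{n-1}}, x_1) || m(x_{t_n} | x_{t_{n-1}}) ) − E_{q^ref(x_{t_N} | x_0, x_1)} [ log m(x_1 | x_{t_N}) ] ]. Then among all Markov processes m with full-support transition probabilities and m(x_0) = q(x_0), the Markovian projection proj_M(q) is the unique minimizer of L(m). -/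
open Finset

variable {X : Type*} [Fintype X] [DecidableEq X] {N : ℕ}

set_option linter.unusedSectionVars false
set_option linter.unusedVariables false
set_option maxHeartbeats 1000000

/-! ### Auxiliary lemmas -/

section Aux

/-- Sum over a pi type by splitting off the first coordinate. -/
lemma sum_cons_split {k : ℕ} (f : (Fin (k+1) → X) → ℝ) :
    ∑ ω : Fin (k+1) → X, f ω = ∑ x : X, ∑ v : Fin k → X, f (Fin.cons x v) := by
  rw [← (Fin.consEquiv (fun _ : Fin (k+1) => X)).sum_comp f, Fintype.sum_prod_type]
  rfl

lemma sum_ite_pos_traj [Nonempty X] (p : Traj X N → ℝ) (hp : ∀ ω, 0 < p ω)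
    (P : Traj X N → Prop) [DecidablePred P] (h : ∃ ω, P ω) :
    0 < ∑ ω : Traj X N, if P ω then p ω else 0 := by
  obtain ⟨ω₀, h₀⟩ := h
  refine Finset.sum_pos' (fun ω _ => ?_) ⟨ω₀, Finset.mem_univ _, by simp [h₀, hp ω₀]⟩
  split
  · exact (hp ω).le
  · exact le_refl _

lemma timeMarg_pos [Nonempty X] {p : Traj X N → ℝ} (hp : ∀ ω, 0 < p ω) (i : Fin (N+2)) (x : X) :
    0 < timeMarg p i x :=
  sum_ite_pos_traj p hp _ ⟨fun _ => x, rfl⟩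

lemma pairMarg_pos [Nonempty X] {p : Traj X N → ℝ} (hp : ∀ ω, 0 < p ω) (n : Fin (N+1)) (y z : X) :
    0 < pairMarg p n y z := by
  refine sum_ite_pos_traj p hp _ ⟨fun i => if i = n.castSucc then y else z, ?_, ?_⟩
  · simp
  · have : n.succ ≠ n.castSucc := by simp [Fin.ext_iff]
    simp [this]

lemma endMarg_pos [Nonempty X] {p : Traj X N → ℝ} (hp : ∀ ω, 0 < p ω) (a b : X) :
    0 < endMarg p a b := by
  refine sum_ite_pos_traj p hp _ ⟨fun i => if i = 0 then a else b, ?_, ?_⟩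
  · simp
  · have : (Fin.last (N+1)) ≠ 0 := by simp [Fin.ext_iff]
    simp [this]

lemma sum_pairMarg_right (p : Traj X N → ℝ) (n : Fin (N+1)) (y : X) :
    ∑ z, pairMarg p n y z = timeMarg p n.castSucc y := by
  unfold pairMarg timeMarg
  rw [Finset.sum_comm]
  refine Finset.sum_congr rfl fun ω _ => ?_
  rw [Finset.sum_eq_single (ω n.succ)]
  · by_cases h : ω n.castSucc = y <;> simp [h]
  · intro z _ hz; simp [Ne.symm hz]
  · simp

lemma sum_pairMarg_left (p : Traj X N → ℝ) (n : Fin (N+1)) (z : X) :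
    ∑ y, pairMarg p n y z = timeMarg p n.succ z := by
  unfold pairMarg timeMarg
  rw [Finset.sum_comm]
  refine Finset.sum_congr rfl fun ω _ => ?_
  rw [Finset.sum_eq_single (ω n.castSucc)]
  · by_cases h : ω n.succ = z <;> simp [h]
  · intro y _ hy; simp [Ne.symm hy]
  · simp

lemma sum_transP_eq_one {p : Traj X N → ℝ} {n : Fin (N+1)} {y : X}
    (h : timeMarg p n.castSucc y ≠ 0) : ∑ z, transP p n y z = 1 := by
  unfold transP
  rw [← Finset.sum_div, sum_pairMarg_right, div_self h]

lemma sum_comm3 {α β γ : Type*} [Fintype α] [Fintype β] [Fintype γ] (F : α → β → γ → ℝ) :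
    ∑ a, ∑ b, ∑ c, F a b c = ∑ c, ∑ a, ∑ b, F a b c :=
  calc ∑ a, ∑ b, ∑ c, F a b c = ∑ a, ∑ c, ∑ b, F a b c :=
        Finset.sum_congr rfl fun _ _ => Finset.sum_comm
    _ = ∑ c, ∑ a, ∑ b, F a b c := Finset.sum_comm

lemma sum_comm4 {α β γ δ : Type*} [Fintype α] [Fintype β] [Fintype γ] [Fintype δ]
    (F : α → β → γ → δ → ℝ) :
    ∑ a, ∑ b, ∑ c, ∑ d, F a b c d = ∑ c, ∑ d, ∑ a, ∑ b, F a b c d :=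
  calc ∑ a, ∑ b, ∑ c, ∑ d, F a b c d = ∑ c, ∑ a, ∑ b, ∑ d, F a b c d :=
        sum_comm3 (fun a b c => ∑ d, F a b c d)
    _ = ∑ c, ∑ d, ∑ a, ∑ b, F a b c d :=
        Finset.sum_congr rfl fun c _ => sum_comm3 (fun a b d => F a b c d)

lemma sum_fiber_start (f : Traj X N → ℝ) :
    ∑ ω : Traj X N, f ω = ∑ a : X, ∑ ω : Traj X N, if ω 0 = a then f ω else 0 := by
  rw [Finset.sum_comm]
  refine Finset.sum_congr rfl fun ω _ => ?_
  rw [Finset.sum_eq_single (ω 0)]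
  · simp
  · intro a _ ha; simp [Ne.symm ha]
  · simp

lemma sum_fiber_ends (f : Traj X N → ℝ) :
    ∑ ω : Traj X N, f ω = ∑ a : X, ∑ b : X, ∑ ω : Traj X N,
      if ω 0 = a ∧ ω (Fin.last (N+1)) = b then f ω else 0 := by
  have perω : ∀ ω : Traj X N, ∑ a : X, ∑ b : X,
      (if ω 0 = a ∧ ω (Fin.last (N+1)) = b then f ω else 0) = f ω := by
    intro ω
    rw [Finset.sum_eq_single (ω 0)]
    · rw [Finset.sum_eq_single (ω (Fin.last (N+1)))]
      · simp
      · intro b _ hb; simp [Ne.symm hb]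
      · simp
    · intro a _ ha; rw [Finset.sum_eq_zero]; intro b _; simp [Ne.symm ha]
    · simp
  have h1 : ∑ ω : Traj X N, f ω
      = ∑ ω : Traj X N, ∑ a : X, ∑ b : X,
          (if ω 0 = a ∧ ω (Fin.last (N+1)) = b then f ω else 0) :=
    Finset.sum_congr rfl fun ω _ => (perω ω).symm
  rw [h1, Finset.sum_comm]
  exact Finset.sum_congr rfl fun a _ => Finset.sum_comm

lemma glue_self (ω : Traj X N) :
    glue (ω 0) (fun i => ω i.succ.castSucc) (ω (Fin.last (N+1))) = ω := by
  funext i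
  refine Fin.cases ?_ ?_ i
  · simp [glue]
  · intro j
    simp only [glue, Fin.cons_succ]
    refine Fin.lastCases ?_ ?_ j
    · simp [Fin.snoc_last, Fin.succ_last]
    · intro j'
      rw [Fin.snoc_castSucc]
      rw [Fin.succ_castSucc]

lemma recp_pointwise [Nonempty X] (qref q : Traj X N → ℝ) (hqrefpos : ∀ ω, 0 < qref ω)
    (hqR : IsReciprocal qref q) (hqend : ∀ a b : X, 0 < endMarg q a b) (ω : Traj X N) :
    q ω = qref ω / endMarg qref (ω 0) (ω (Fin.last (N+1))) *
      endMarg q (ω 0) (ω (Fin.last (N+1))) := by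
  have h := hqR (ω 0) (ω (Fin.last (N+1))) (hqend _ _) (fun i => ω i.succ.castSucc)
  unfold bridge at h
  rw [glue_self ω] at h
  have h1 : endMarg q (ω 0) (ω (Fin.last (N+1))) ≠ 0 := (hqend _ _).ne'
  rw [← h, div_mul_cancel₀ _ h1]

lemma KLd_expand {Z : Type*} [Fintype Z] (r t : Z → ℝ) (hr : ∀ z, r z ≠ 0)
    (ht : ∀ z, t z ≠ 0) :
    KLd r t = (∑ z, r z * Real.log (r z)) - ∑ z, r z * Real.log (t z) := by
  unfold KLd
  rw [← Finset.sum_sub_distrib]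
  refine Finset.sum_congr rfl fun z _ => ?_
  rw [Real.log_div (hr z) (ht z)]
  ring

noncomputable def fwd (μ : X → ℝ) (T : ℕ → X → X → ℝ) : ℕ → X → ℝ
  | 0 => μ
  | (j+1) => fun z => ∑ y, fwd μ T j y * T j y z

noncomputable def chainW (k : ℕ) (μ : X → ℝ) (T : ℕ → X → X → ℝ) (ω : Fin (k+1) → X) : ℝ :=
  μ (ω 0) * ∏ n : Fin k, T n (ω n.castSucc) (ω n.succ)

lemma chainW_cons {k : ℕ} (μ : X → ℝ) (T : ℕ → X → X → ℝ) (x : X) (v : Fin (k+1) → X) :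
    chainW (k+1) μ T (Fin.cons x v) = μ x * chainW k (T 0 x) (fun j => T (j+1)) v := by
  unfold chainW
  rw [Fin.prod_univ_succ]
  simp only [Fin.castSucc_zero, Fin.cons_zero, Fin.cons_succ, ← Fin.succ_castSucc, Fin.val_succ,
    Fin.succ_zero_eq_one, Fin.val_zero]
  have h1 : (Fin.cons x v : Fin (k+2) → X) 1 = v 0 := by
    have h2 : (1 : Fin (k+2)) = Fin.succ 0 := by simp [Fin.ext_iff]
    rw [h2, Fin.cons_succ]
  rw [h1]

lemma chainW_total : ∀ (k : ℕ) (T : ℕ → X → X → ℝ), (∀ j y, ∑ z, T j y z = 1) →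
    ∀ (μ : X → ℝ), ∑ ω : Fin (k+1) → X, chainW k μ T ω = ∑ w, μ w := by
  intro k
  induction k with
  | zero =>
    intro T hT μ
    rw [sum_cons_split]
    simp [chainW]
  | succ k ih =>
    intro T hT μ
    rw [sum_cons_split]
    have : ∀ x : X, ∑ v : Fin (k+1) → X, chainW (k+1) μ T (Fin.cons x v) = μ x := by
      intro x
      simp only [chainW_cons, ← Finset.mul_sum]
      rw [ih (fun j => T (j+1)) (fun j y => hT (j+1) y) (T 0 x), hT 0 x, mul_one]
    simp only [this]

lemma chainW_mask {k : ℕ} (ν : X → ℝ) (T : ℕ → X → X → ℝ) (z : X) (v : Fin (k+1) → X) :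
    (if v 0 = z then chainW k ν T v else 0)
      = chainW k (fun w => if w = z then ν w else 0) T v := by
  unfold chainW
  split_ifs with h
  · simp [h]
  · simp [h]

lemma fwd_cons : ∀ (j : ℕ) (μ : X → ℝ) (T : ℕ → X → X → ℝ) (y : X),
    ∑ x, μ x * fwd (T 0 x) (fun i => T (i+1)) j y = fwd μ T (j+1) y := by
  intro j
  induction j with
  | zero => intro μ T y; rfl
  | succ j ih =>
    intro μ T y
    show ∑ x, μ x * ∑ w, fwd (T 0 x) (fun i => T (i+1)) j w * T (j+1) w y
      = ∑ w, fwd μ T (j+1) w * T (j+1) w y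
    simp only [Finset.mul_sum, ← mul_assoc]
    rw [Finset.sum_comm]
    refine Finset.sum_congr rfl fun w _ => ?_
    rw [← Finset.sum_mul, ih]

lemma chainW_first (k : ℕ) (T : ℕ → X → X → ℝ) (hT : ∀ j y, ∑ z, T j y z = 1)
    (ν : X → ℝ) (z : X) :
    ∑ v : Fin (k+1) → X, (if v 0 = z then chainW k ν T v else 0) = ν z := by
  simp only [chainW_mask]
  rw [chainW_total k T hT]
  simp

lemma chainW_pair : ∀ (k : ℕ) (T : ℕ → X → X → ℝ), (∀ j y, ∑ z, T j y z = 1) →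
    ∀ (μ : X → ℝ) (i : ℕ) (hi : i < k) (y z : X),
    ∑ ω : Fin (k+1) → X,
        (if ω ⟨i, by omega⟩ = y ∧ ω ⟨i+1, by omega⟩ = z then chainW k μ T ω else 0)
      = fwd μ T i y * T i y z := by
  intro k
  induction k with
  | zero => intro T hT μ i hi; omega
  | succ k ih =>
    intro T hT μ i hi y z
    rw [sum_cons_split]
    rcases i with _ | j
    · have i0 : (⟨0, by omega⟩ : Fin (k+2)) = 0 := rfl
      have i1 : (⟨0+1, by omega⟩ : Fin (k+2)) = Fin.succ 0 := by simp [Fin.ext_iff]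
      simp only [i0, i1, Fin.cons_zero, Fin.cons_succ, chainW_cons]
      have key : ∀ x, (∑ v : Fin (k+1) → X,
          if x = y ∧ v 0 = z then μ x * chainW k (T 0 x) (fun j => T (j+1)) v else 0)
          = if x = y then μ x * T 0 x z else 0 := by
        intro x
        by_cases hx : x = y
        · subst hx
          have : ∀ v : Fin (k+1) → X,
              (if x = x ∧ v 0 = z then μ x * chainW k (T 0 x) (fun j => T (j+1)) v else 0)
              = μ x * (if v 0 = z then chainW k (T 0 x) (fun j => T (j+1)) v else 0) := by
            intro v; split_ifs with h1 h2 <;> simp_all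
          rw [Finset.sum_congr rfl fun v _ => this v, ← Finset.mul_sum,
            chainW_first k _ (fun j y => hT (j+1) y) (T 0 x) z]
          simp
        · simp [hx]
      rw [Finset.sum_congr rfl fun x _ => key x, Finset.sum_ite_eq' Finset.univ y
        (fun x => μ x * T 0 x z)]
      simp [fwd]
    · have i1 : (⟨j+1, by omega⟩ : Fin (k+2)) = Fin.succ ⟨j, by omega⟩ := by
        simp [Fin.ext_iff]
      have i2 : (⟨j+1+1, by omega⟩ : Fin (k+2)) = Fin.succ ⟨j+1, by omega⟩ := by
        simp [Fin.ext_iff]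
      simp only [i1, i2, Fin.cons_succ, chainW_cons]
      have key : ∀ x, (∑ v : Fin (k+1) → X,
          if v ⟨j, by omega⟩ = y ∧ v ⟨j+1, by omega⟩ = z then
            μ x * chainW k (T 0 x) (fun j => T (j+1)) v else 0)
          = μ x * (fwd (T 0 x) (fun i => T (i+1)) j y * T (j+1) y z) := by
        intro x
        have : ∀ v : Fin (k+1) → X,
            (if v ⟨j, by omega⟩ = y ∧ v ⟨j+1, by omega⟩ = z then
              μ x * chainW k (T 0 x) (fun j => T (j+1)) v else 0)
            = μ x * (if v ⟨j, by omega⟩ = y ∧ v ⟨j+1, by omega⟩ = z then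
              chainW k (T 0 x) (fun j => T (j+1)) v else 0) := by
          intro v; split_ifs <;> simp
        rw [Finset.sum_congr rfl fun v _ => this v, ← Finset.mul_sum,
          ih (fun j => T (j+1)) (fun j y => hT (j+1) y) (T 0 x) j (by omega) y z]
      rw [Finset.sum_congr rfl fun x _ => key x]
      simp only [← mul_assoc]
      rw [← Finset.sum_mul, fwd_cons]

lemma gibbs_key {Z : Type*} [Fintype Z] {p r : Z → ℝ} (hp : ∀ z, 0 < p z)
    (hr : ∀ z, 0 < r z) (hps : ∑ z, p z = 1) (hrs : ∑ z, r z = 1) :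
    ∑ z, p z * Real.log (p z / r z)
      = ∑ z, p z * ((r z / p z - 1) - Real.log (r z / p z)) := by
  have perz : ∀ z, p z * ((r z / p z - 1) - Real.log (r z / p z))
      = r z - p z + p z * Real.log (p z / r z) := by
    intro z
    rw [Real.log_div (hr z).ne' (hp z).ne', Real.log_div (hp z).ne' (hr z).ne']
    have e : p z * (r z / p z) = r z := by
      rw [mul_comm, div_mul_cancel₀ _ (hp z).ne']
    rw [mul_sub, mul_sub, e]
    ring
  rw [Finset.sum_congr rfl fun z _ => perz z, Finset.sum_add_distrib,
    Finset.sum_sub_distrib, hps, hrs]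
  ring

lemma gibbs_term_nonneg {p r : ℝ} (hp : 0 < p) (hr : 0 < r) :
    0 ≤ p * ((r / p - 1) - Real.log (r / p)) := by
  have h := Real.log_le_sub_one_of_pos (div_pos hr hp)
  nlinarith

lemma gibbs_nonneg {Z : Type*} [Fintype Z] {p r : Z → ℝ} (hp : ∀ z, 0 < p z)
    (hr : ∀ z, 0 < r z) (hps : ∑ z, p z = 1) (hrs : ∑ z, r z = 1) :
    0 ≤ ∑ z, p z * Real.log (p z / r z) := by
  rw [gibbs_key hp hr hps hrs]
  exact Finset.sum_nonneg fun z _ => gibbs_term_nonneg (hp z) (hr z)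

lemma gibbs_eq {Z : Type*} [Fintype Z] {p r : Z → ℝ} (hp : ∀ z, 0 < p z)
    (hr : ∀ z, 0 < r z) (hps : ∑ z, p z = 1) (hrs : ∑ z, r z = 1)
    (h0 : ∑ z, p z * Real.log (p z / r z) = 0) : ∀ z, p z = r z := by
  rw [gibbs_key hp hr hps hrs] at h0
  have hz := (Finset.sum_eq_zero_iff_of_nonneg
    (fun z _ => gibbs_term_nonneg (hp z) (hr z))).1 h0
  intro z
  have h := hz z (Finset.mem_univ z)
  have h2 : (r z / p z - 1) - Real.log (r z / p z) = 0 := by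
    rcases mul_eq_zero.1 h with h' | h'
    · exact absurd h' (hp z).ne'
    · exact h'
  by_contra hne
  have hd : r z / p z ≠ 1 := by
    intro hc
    exact hne ((div_eq_one_iff_eq (hp z).ne').1 hc).symm
  have := Real.log_lt_sub_one_of_pos (div_pos (hr z) (hp z)) hd
  linarith

lemma chain_split_swap (p : Traj X N → ℝ) (hM : IsMarkov p) (n : Fin (N+1)) (ω τ : Traj X N)
    (hyy : ω n.castSucc = τ n.castSucc) :
    p (fun i => if (i : ℕ) ≤ (n : ℕ) then ω i else τ i) *
      p (fun i => if (i : ℕ) ≤ (n : ℕ) then τ i else ω i) = p ω * p τ := by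
  set σ : Traj X N := fun i => if (i : ℕ) ≤ (n : ℕ) then ω i else τ i with hσ
  set ρ : Traj X N := fun i => if (i : ℕ) ≤ (n : ℕ) then τ i else ω i with hρ
  rw [hM σ, hM ρ, hM ω, hM τ]
  have h0σ : σ 0 = ω 0 := by simp [hσ]
  have h0ρ : ρ 0 = τ 0 := by simp [hρ]
  rw [h0σ, h0ρ]
  have hprod : (∏ k : Fin (N+1), transP p k (σ k.castSucc) (σ k.succ)) *
      (∏ k : Fin (N+1), transP p k (ρ k.castSucc) (ρ k.succ))
      = (∏ k : Fin (N+1), transP p k (ω k.castSucc) (ω k.succ)) *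
        (∏ k : Fin (N+1), transP p k (τ k.castSucc) (τ k.succ)) := by
    rw [← Finset.prod_mul_distrib, ← Finset.prod_mul_distrib]
    refine Finset.prod_congr rfl fun k _ => ?_
    have hcs : (k.castSucc : ℕ) = (k : ℕ) := rfl
    have hsu : (k.succ : ℕ) = (k : ℕ) + 1 := rfl
    by_cases h1 : (k : ℕ) + 1 ≤ (n : ℕ)
    · have h2 : (k : ℕ) ≤ (n : ℕ) := by omega
      simp only [hσ, hρ, hcs, hsu, if_pos h1, if_pos h2]
    · by_cases h2 : (k : ℕ) ≤ (n : ℕ)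
      · have hkn : k = n := Fin.ext (by omega)
        subst hkn
        simp only [hσ, hρ, hcs, hsu, if_pos h2, if_neg h1]
        rw [hyy]
        ring
      · simp only [hσ, hρ, hcs, hsu, if_neg h1, if_neg h2]
        ring
  rw [mul_mul_mul_comm, hprod, ← mul_mul_mul_comm]

lemma markov_swap_s2 (p : Traj X N → ℝ) (hM : IsMarkov p) (n : Fin (N+1)) (a y z b : X) :
    (∑ ω : Traj X N, if ω 0 = a ∧ ω n.castSucc = y ∧ ω n.succ = z ∧
        ω (Fin.last (N+1)) = b then p ω else 0) *
      (∑ ω : Traj X N, if ω n.castSucc = y ∧ ω (Fin.last (N+1)) = b then p ω else 0)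
    = (∑ ω : Traj X N, if ω 0 = a ∧ ω n.castSucc = y ∧ ω (Fin.last (N+1)) = b
        then p ω else 0) *
      (∑ ω : Traj X N, if ω n.castSucc = y ∧ ω n.succ = z ∧ ω (Fin.last (N+1)) = b
        then p ω else 0) := by
  have lhs_eq : (∑ ω : Traj X N, if ω 0 = a ∧ ω n.castSucc = y ∧ ω n.succ = z ∧
        ω (Fin.last (N+1)) = b then p ω else 0) *
      (∑ ω : Traj X N, if ω n.castSucc = y ∧ ω (Fin.last (N+1)) = b then p ω else 0)
      = ∑ pr : Traj X N × Traj X N,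
        (if pr.1 0 = a ∧ pr.1 n.castSucc = y ∧ pr.1 n.succ = z ∧
          pr.1 (Fin.last (N+1)) = b then p pr.1 else 0) *
        (if pr.2 n.castSucc = y ∧ pr.2 (Fin.last (N+1)) = b then p pr.2 else 0) := by
    rw [Fintype.sum_prod_type, Finset.sum_mul_sum]
  have rhs_eq : (∑ ω : Traj X N, if ω 0 = a ∧ ω n.castSucc = y ∧
        ω (Fin.last (N+1)) = b then p ω else 0) *
      (∑ ω : Traj X N, if ω n.castSucc = y ∧ ω n.succ = z ∧ ω (Fin.last (N+1)) = b
        then p ω else 0)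
      = ∑ pr : Traj X N × Traj X N,
        (if pr.1 0 = a ∧ pr.1 n.castSucc = y ∧ pr.1 (Fin.last (N+1)) = b
          then p pr.1 else 0) *
        (if pr.2 n.castSucc = y ∧ pr.2 n.succ = z ∧ pr.2 (Fin.last (N+1)) = b
          then p pr.2 else 0) := by
    rw [Fintype.sum_prod_type, Finset.sum_mul_sum]
  rw [lhs_eq, rhs_eq]
  have sinv : ∀ x : Traj X N × Traj X N,
      ((fun (pr : Traj X N × Traj X N) =>
        ((fun i => if (i : ℕ) ≤ (n : ℕ) then pr.1 i else pr.2 i : Traj X N),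
         (fun i => if (i : ℕ) ≤ (n : ℕ) then pr.2 i else pr.1 i : Traj X N)))
        ((fun (pr : Traj X N × Traj X N) =>
        ((fun i => if (i : ℕ) ≤ (n : ℕ) then pr.1 i else pr.2 i : Traj X N),
         (fun i => if (i : ℕ) ≤ (n : ℕ) then pr.2 i else pr.1 i : Traj X N))) x)) = x := by
    rintro ⟨ω, τ⟩
    refine Prod.ext ?_ ?_ <;> · funext i; simp only; split_ifs <;> rfl
  set s : Traj X N × Traj X N → Traj X N × Traj X N := fun pr =>
    ((fun i => if (i : ℕ) ≤ (n : ℕ) then pr.1 i else pr.2 i : Traj X N),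
     (fun i => if (i : ℕ) ≤ (n : ℕ) then pr.2 i else pr.1 i : Traj X N)) with hs
  have e : Traj X N × Traj X N ≃ Traj X N × Traj X N := ⟨s, s, sinv, sinv⟩
  refine Fintype.sum_equiv ⟨s, s, sinv, sinv⟩ _ _ ?_
  rintro ⟨ω, τ⟩
  simp only [Equiv.coe_fn_mk, hs]
  set σ : Traj X N := fun i => if (i : ℕ) ≤ (n : ℕ) then ω i else τ i with hσ
  set ρ : Traj X N := fun i => if (i : ℕ) ≤ (n : ℕ) then τ i else ω i with hρ
  have hnN : (n : ℕ) ≤ N := by omega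
  have c1 : σ 0 = ω 0 := by simp [hσ]
  have c2 : σ n.castSucc = ω n.castSucc := by simp [hσ]
  have c3 : σ n.succ = τ n.succ := by simp [hσ, Fin.val_succ]
  have c4 : σ (Fin.last (N+1)) = τ (Fin.last (N+1)) := by
    simp only [hσ, Fin.val_last]; rw [if_neg (by omega)]
  have d1 : ρ 0 = τ 0 := by simp [hρ]
  have d2 : ρ n.castSucc = τ n.castSucc := by simp [hρ]
  have d3 : ρ n.succ = ω n.succ := by simp [hρ, Fin.val_succ]
  have d4 : ρ (Fin.last (N+1)) = ω (Fin.last (N+1)) := by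
    simp only [hρ, Fin.val_last]; rw [if_neg (by omega)]
  by_cases h : (ω 0 = a ∧ ω n.castSucc = y ∧ ω n.succ = z ∧ ω (Fin.last (N+1)) = b)
      ∧ (τ n.castSucc = y ∧ τ (Fin.last (N+1)) = b)
  · obtain ⟨⟨e1, e2, e3, e4⟩, ⟨f1, f2⟩⟩ := h
    rw [if_pos ⟨e1, e2, e3, e4⟩, if_pos ⟨f1, f2⟩,
      if_pos (show σ 0 = a ∧ σ n.castSucc = y ∧ σ (Fin.last (N+1)) = b by
        exact ⟨c1.trans e1, c2.trans e2, c4.trans f2⟩),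
      if_pos (show ρ n.castSucc = y ∧ ρ n.succ = z ∧ ρ (Fin.last (N+1)) = b by
        exact ⟨d2.trans f1, d3.trans e3, d4.trans e4⟩)]
    exact (chain_split_swap p hM n ω τ (e2.trans f1.symm)).symm
  · have h' : ¬ ((σ 0 = a ∧ σ n.castSucc = y ∧ σ (Fin.last (N+1)) = b)
        ∧ (ρ n.castSucc = y ∧ ρ n.succ = z ∧ ρ (Fin.last (N+1)) = b)) := by
      rintro ⟨⟨g1, g2, g3⟩, ⟨k1, k2, k3⟩⟩
      rw [c1] at g1; rw [c2] at g2; rw [c4] at g3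
      rw [d2] at k1; rw [d3] at k2; rw [d4] at k3
      exact h ⟨⟨g1, g2, k2, k3⟩, ⟨k1, g3⟩⟩
    rcases not_and_or.1 h with hh | hh
    · rw [if_neg hh, zero_mul]
      rcases not_and_or.1 h' with gg | gg
      · rw [if_neg gg, zero_mul]
      · rw [if_neg gg, mul_zero]
    · rw [if_neg hh, mul_zero]
      rcases not_and_or.1 h' with gg | gg
      · rw [if_neg gg, zero_mul]
      · rw [if_neg gg, mul_zero]

lemma pairMarg_projM [Nonempty X] (q : Traj X N → ℝ) (hqpos : ∀ ω, 0 < q ω)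
    (n : Fin (N+1)) (y z : X) :
    pairMarg (projM q) n y z = pairMarg q n y z := by
  have cardpos : (0:ℝ) < (Fintype.card X : ℝ) := by
    exact_mod_cast Fintype.card_pos
  set Tq : ℕ → X → X → ℝ := fun j => if h : j < N+1 then transP q ⟨j, h⟩
    else fun _ _ => (Fintype.card X : ℝ)⁻¹ with hTq
  have tpos : ∀ i x, 0 < timeMarg q i x := timeMarg_pos hqpos
  have rows : ∀ j w, ∑ u, Tq j w u = 1 := by
    intro j w
    by_cases h : j < N+1
    · simp only [hTq, dif_pos h]
      exact sum_transP_eq_one (tpos _ _).ne'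
    · simp only [hTq, dif_neg h]
      rw [Finset.sum_const, nsmul_eq_mul, Finset.card_univ, mul_inv_cancel₀ cardpos.ne']
  have chainEq : ∀ ω : Traj X N, projM q ω = chainW (N+1) (timeMarg q 0) Tq ω := by
    intro ω
    unfold projM chainW
    congr 1
    refine Finset.prod_congr rfl fun k _ => ?_
    simp only [hTq]
    rw [dif_pos k.isLt]
  have fwdq : ∀ i, ∀ hi : i ≤ N+1, ∀ w, fwd (timeMarg q 0) Tq i w
      = timeMarg q ⟨i, by omega⟩ w := by
    intro i
    induction i with
    | zero =>
      intro hi w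
      have h0 : (⟨0, by omega⟩ : Fin (N+2)) = 0 := by
        exact Fin.ext (by simp)
      rw [h0]
      rfl
    | succ i ih =>
      intro hi w
      have hiN : i < N+1 := by omega
      show ∑ u, fwd (timeMarg q 0) Tq i u * Tq i u w = _
      have step : ∀ u, fwd (timeMarg q 0) Tq i u * Tq i u w
          = pairMarg q ⟨i, hiN⟩ u w := by
        intro u
        rw [ih (by omega) u]
        simp only [hTq, dif_pos hiN]
        have hcs : (⟨i, by omega⟩ : Fin (N+2)) = (⟨i, hiN⟩ : Fin (N+1)).castSucc :=
          Fin.ext rfl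
        rw [hcs]
        unfold transP
        rw [mul_comm, div_mul_cancel₀ _ (tpos _ u).ne']
      rw [Finset.sum_congr rfl fun u _ => step u, sum_pairMarg_left]
      rfl
  have main := chainW_pair (N+1) Tq rows (timeMarg q 0) (n : ℕ) n.isLt y z
  have idx1 : (⟨(n:ℕ), by omega⟩ : Fin (N+2)) = n.castSucc := Fin.ext rfl
  have idx2 : (⟨(n:ℕ)+1, by omega⟩ : Fin (N+2)) = n.succ := Fin.ext rfl
  rw [idx1, idx2] at main
  have lhs : pairMarg (projM q) n y z = fwd (timeMarg q 0) Tq (n : ℕ) y * Tq (n : ℕ) y z := by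
    unfold pairMarg
    rw [Finset.sum_congr rfl fun ω _ => by rw [chainEq ω]]
    exact main
  rw [lhs, fwdq (n : ℕ) (by omega) y]
  simp only [hTq, dif_pos n.isLt]
  have idx3 : (⟨(n:ℕ), by omega⟩ : Fin (N+2)) = n.castSucc := Fin.ext rfl
  have idx4 : (⟨(n:ℕ), n.isLt⟩ : Fin (N+1)) = n := Fin.ext rfl
  rw [idx3, idx4]
  unfold transP
  rw [mul_comm, div_mul_cancel₀ _ (tpos _ y).ne']

lemma timeMarg_projM [Nonempty X] (q : Traj X N → ℝ) (hqpos : ∀ ω, 0 < q ω)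
    (n : Fin (N+1)) (y : X) :
    timeMarg (projM q) n.castSucc y = timeMarg q n.castSucc y := by
  rw [← sum_pairMarg_right (projM q) n y, ← sum_pairMarg_right q n y]
  exact Finset.sum_congr rfl fun z _ => pairMarg_projM q hqpos n y z

lemma transP_projM [Nonempty X] (q : Traj X N → ℝ) (hqpos : ∀ ω, 0 < q ω)
    (n : Fin (N+1)) (y z : X) :
    transP (projM q) n y z = transP q n y z := by
  unfold transP
  rw [pairMarg_projM q hqpos, timeMarg_projM q hqpos]

section Kident

variable [Nonempty X] (qref q : Traj X N → ℝ)

lemma K1pt (hqrefpos : ∀ ω, 0 < qref ω)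
    (hqR : IsReciprocal qref q) (hqend : ∀ a b : X, 0 < endMarg q a b) (y b : X) :
    ∑ a, endMarg q a b * bridgeAt qref ((Fin.last N).castSucc) y a b
      = pairMarg q (Fin.last N) y b := by
  have recp := recp_pointwise qref q hqrefpos hqR hqend
  have Eref : ∀ a b : X, 0 < endMarg qref a b := fun a b => endMarg_pos hqrefpos a b
  have hsucc : (Fin.last N).succ = Fin.last (N+1) := rfl
  have rhs : pairMarg q (Fin.last N) y b = ∑ a, (endMarg q a b / endMarg qref a b) *
      ∑ ω : Traj X N, if ω 0 = a ∧ ω ((Fin.last N).castSucc) = y ∧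
        ω (Fin.last (N+1)) = b then qref ω else 0 := by
    unfold pairMarg
    rw [hsucc]
    rw [sum_fiber_start (fun ω => if ω ((Fin.last N).castSucc) = y ∧
      ω (Fin.last (N+1)) = b then q ω else 0)]
    refine Finset.sum_congr rfl fun a _ => ?_
    rw [Finset.mul_sum]
    refine Finset.sum_congr rfl fun ω _ => ?_
    by_cases hA : ω 0 = a
    · rw [if_pos hA]
      by_cases hB : ω ((Fin.last N).castSucc) = y ∧ ω (Fin.last (N+1)) = b
      · rw [if_pos hB, if_pos ⟨hA, hB.1, hB.2⟩, recp ω, hA, hB.2]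
        ring
      · rw [if_neg hB, if_neg (fun hc => hB ⟨hc.2.1, hc.2.2⟩), mul_zero]
    · rw [if_neg hA, if_neg (fun hc => hA hc.1), mul_zero]
  rw [rhs]
  refine Finset.sum_congr rfl fun a _ => ?_
  unfold bridgeAt
  field_simp

lemma K2pt (hqrefpos : ∀ ω, 0 < qref ω) (hqrefM : IsMarkov qref)
    (hqR : IsReciprocal qref q) (hqend : ∀ a b : X, 0 < endMarg q a b)
    (n : Fin (N+1)) (y z : X) :
    ∑ a, ∑ b, endMarg q a b *
        (bridgeAt qref n.castSucc y a b * condTrans qref n y z b)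
      = pairMarg q n y z := by
  have recp := recp_pointwise qref q hqrefpos hqR hqend
  have Eref : ∀ a b : X, 0 < endMarg qref a b := fun a b => endMarg_pos hqrefpos a b
  have hQ2 : ∀ b, 0 < ∑ ω : Traj X N,
      if ω n.castSucc = y ∧ ω (Fin.last (N+1)) = b then qref ω else 0 := by
    intro b
    refine sum_ite_pos_traj qref hqrefpos _
      ⟨fun i => if i = n.castSucc then y else b, by simp, ?_⟩
    have hne : Fin.last (N+1) ≠ n.castSucc := by
      simp only [ne_eq, Fin.ext_iff, Fin.val_last, Fin.coe_castSucc]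
      omega
    simp [hne]
  have rhs : pairMarg q n y z = ∑ a, ∑ b, (endMarg q a b / endMarg qref a b) *
      ∑ ω : Traj X N, if ω 0 = a ∧ ω n.castSucc = y ∧ ω n.succ = z ∧
        ω (Fin.last (N+1)) = b then qref ω else 0 := by
    unfold pairMarg
    rw [sum_fiber_ends (fun ω => if ω n.castSucc = y ∧ ω n.succ = z then q ω else 0)]
    refine Finset.sum_congr rfl fun a _ => Finset.sum_congr rfl fun b _ => ?_
    rw [Finset.mul_sum]
    refine Finset.sum_congr rfl fun ω _ => ?_
    by_cases hA : ω 0 = a ∧ ω (Fin.last (N+1)) = b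
    · rw [if_pos hA]
      by_cases hB : ω n.castSucc = y ∧ ω n.succ = z
      · rw [if_pos hB, if_pos ⟨hA.1, hB.1, hB.2, hA.2⟩, recp ω, hA.1, hA.2]
        ring
      · rw [if_neg hB, if_neg (fun hc => hB ⟨hc.2.1, hc.2.2.1⟩), mul_zero]
    · rw [if_neg hA, if_neg (fun hc => hA ⟨hc.1, hc.2.2.2⟩), mul_zero]
  rw [rhs]
  refine Finset.sum_congr rfl fun a _ => Finset.sum_congr rfl fun b _ => ?_
  unfold bridgeAt condTrans
  have key := markov_swap_s2 qref hqrefM n a y z b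
  have h2 := (hQ2 b).ne'
  have h3 := (Eref a b).ne'
  field_simp
  linear_combination (-(endMarg q a b)) * key

lemma K1w (hqrefpos : ∀ ω, 0 < qref ω)
    (hqR : IsReciprocal qref q) (hqend : ∀ a b : X, 0 < endMarg q a b)
    (f : X → X → ℝ) :
    ∑ a, ∑ b, endMarg q a b *
        ∑ y, bridgeAt qref ((Fin.last N).castSucc) y a b * f y b
      = ∑ y, ∑ z, pairMarg q (Fin.last N) y z * f y z := by
  have h1 : ∀ a b : X, endMarg q a b *
      ∑ y, bridgeAt qref ((Fin.last N).castSucc) y a b * f y b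
      = ∑ y, endMarg q a b * bridgeAt qref ((Fin.last N).castSucc) y a b * f y b := by
    intro a b
    rw [Finset.mul_sum]
    exact Finset.sum_congr rfl fun y _ => by ring
  rw [Finset.sum_congr rfl fun a _ => Finset.sum_congr rfl fun b _ => h1 a b]
  rw [Finset.sum_comm]
  have h2 : ∀ b : X, ∑ a, ∑ y, endMarg q a b *
      bridgeAt qref ((Fin.last N).castSucc) y a b * f y b
      = ∑ y, pairMarg q (Fin.last N) y b * f y b := by
    intro b
    rw [Finset.sum_comm]
    refine Finset.sum_congr rfl fun y _ => ?_
    rw [← Finset.sum_mul, K1pt qref q hqrefpos hqR hqend y b]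
  rw [Finset.sum_congr rfl fun b _ => h2 b, Finset.sum_comm]

lemma K2w (hqrefpos : ∀ ω, 0 < qref ω) (hqrefM : IsMarkov qref)
    (hqR : IsReciprocal qref q) (hqend : ∀ a b : X, 0 < endMarg q a b)
    (n : Fin (N+1)) (f : X → X → ℝ) :
    ∑ a, ∑ b, endMarg q a b * ∑ y, bridgeAt qref n.castSucc y a b *
        ∑ z, condTrans qref n y z b * f y z
      = ∑ y, ∑ z, pairMarg q n y z * f y z := by
  have h1 : ∀ a b : X, endMarg q a b * ∑ y, bridgeAt qref n.castSucc y a b *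
      ∑ z, condTrans qref n y z b * f y z
      = ∑ y, ∑ z, endMarg q a b *
          (bridgeAt qref n.castSucc y a b * condTrans qref n y z b) * f y z := by
    intro a b
    rw [Finset.mul_sum]
    refine Finset.sum_congr rfl fun y _ => ?_
    rw [Finset.mul_sum, Finset.mul_sum]
    exact Finset.sum_congr rfl fun z _ => by ring
  rw [Finset.sum_congr rfl fun a _ => Finset.sum_congr rfl fun b _ => h1 a b]
  rw [sum_comm4 (fun a b y z => endMarg q a b *
    (bridgeAt qref n.castSucc y a b * condTrans qref n y z b) * f y z)]
  refine Finset.sum_congr rfl fun y _ => Finset.sum_congr rfl fun z _ => ?_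
  rw [← K2pt qref q hqrefpos hqrefM hqR hqend n y z, Finset.sum_mul]
  exact Finset.sum_congr rfl fun a _ => by rw [Finset.sum_mul]

end Kident

end Aux

/-- The Markovian projection minimizes the diffusion-style loss `L`.
For a reciprocal process `q` with full-support endpoint coupling, among Markov processes
`m` with full-support transitions and `m(x_0) = q(x_0)`, the Markovian projection
`proj_M(q)` is the unique minimizer of
`L(m) = E_{q(x_0,x_1)}[ Σ_{n=1}^N E_{q^ref(x_{t_{n-1}}|x_0,x_1)}
  KL(q^ref(x_{t_n}|x_{t_{n-1}},x_1) ‖ m(x_{t_n}|x_{t_{n-1}}))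
  − E_{q^ref(x_{t_N}|x_0,x_1)}[log m(x_1|x_{t_N})] ]`. -/
theorem markov_proj_minimizes_L
    {X : Type*} [Fintype X] [DecidableEq X] [Nonempty X] {N : ℕ} (hN : 1 ≤ N)
    (qref : Traj X N → ℝ) (hqref : IsPMF qref) (hqrefpos : ∀ ω, 0 < qref ω)
    (hqrefM : IsMarkov qref)
    (q : Traj X N → ℝ) (hq : IsPMF q) (hqR : IsReciprocal qref q)
    (hqend : ∀ a b : X, 0 < endMarg q a b)
    (L : (Traj X N → ℝ) → ℝ)
    (hL : ∀ m : Traj X N → ℝ, L m =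
      ∑ a : X, ∑ b : X, endMarg q a b *
        ((∑ k : Fin N, ∑ y : X, bridgeAt qref k.castSucc.castSucc y a b *
            KLd (fun z : X => condTrans qref k.castSucc y z b)
                (fun z : X => transP m k.castSucc y z)) -
          ∑ y : X, bridgeAt qref ((Fin.last N).castSucc) y a b *
            Real.log (transP m (Fin.last N) y b))) :
    (∀ m : Traj X N → ℝ, IsPMF m → IsMarkov m →
        (∀ (n : Fin (N + 1)) (y z : X), 0 < transP m n y z) →
        (∀ x, timeMarg m 0 x = timeMarg q 0 x) →
        L (projM q) ≤ L m) ∧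
    (∀ m : Traj X N → ℝ, IsPMF m → IsMarkov m →
        (∀ (n : Fin (N + 1)) (y z : X), 0 < transP m n y z) →
        (∀ x, timeMarg m 0 x = timeMarg q 0 x) →
        L m = L (projM q) → m = projM q) := by
    classical
  have qpos : ∀ ω : Traj X N, 0 < q ω := by
    intro ω
    rw [recp_pointwise qref q hqrefpos hqR hqend ω]
    exact mul_pos (div_pos (hqrefpos ω) (endMarg_pos hqrefpos _ _)) (hqend _ _)
  have tqpos : ∀ (i : Fin (N+2)) (x : X), 0 < timeMarg q i x := timeMarg_pos qpos
  have pqpos : ∀ (n : Fin (N+1)) (y z : X), 0 < pairMarg q n y z := pairMarg_pos qpos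
  have trqpos : ∀ (n : Fin (N+1)) (y z : X), 0 < transP q n y z :=
    fun n y z => div_pos (pqpos n y z) (tqpos _ y)
  have sumq1 : ∀ (n : Fin (N+1)) (y : X), ∑ z, transP q n y z = 1 :=
    fun n y => sum_transP_eq_one (tqpos _ y).ne'
  have condpos : ∀ (k : Fin N) (y z b : X), 0 < condTrans qref k.castSucc y z b := by
    intro k y z b
    have hk : (k : ℕ) < N := k.isLt
    have h1 : (0:ℝ) < ∑ ω : Traj X N, if ω k.castSucc.castSucc = y ∧
        ω k.castSucc.succ = z ∧ ω (Fin.last (N+1)) = b then qref ω else 0 := by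
      refine sum_ite_pos_traj qref hqrefpos _
        ⟨fun i => if i = k.castSucc.castSucc then y else
          if i = k.castSucc.succ then z else b, ?_, ?_, ?_⟩
      · simp
      · have hne : (k.castSucc.succ : Fin (N+2)) ≠ k.castSucc.castSucc := by
          simp only [ne_eq, Fin.ext_iff, Fin.val_succ, Fin.coe_castSucc]
          omega
        simp [hne]
      · have hne1 : (Fin.last (N+1)) ≠ k.castSucc.castSucc := by
          simp only [ne_eq, Fin.ext_iff, Fin.val_last, Fin.coe_castSucc]
          omega
        have hne2 : (Fin.last (N+1)) ≠ k.castSucc.succ := by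
          simp only [ne_eq, Fin.ext_iff, Fin.val_last, Fin.val_succ, Fin.coe_castSucc]
          omega
        simp [hne1, hne2]
    have h2 : (0:ℝ) < ∑ ω : Traj X N, if ω k.castSucc.castSucc = y ∧
        ω (Fin.last (N+1)) = b then qref ω else 0 := by
      refine sum_ite_pos_traj qref hqrefpos _
        ⟨fun i => if i = k.castSucc.castSucc then y else b, by simp, ?_⟩
      have hne1 : (Fin.last (N+1)) ≠ k.castSucc.castSucc := by
        simp only [ne_eq, Fin.ext_iff, Fin.val_last, Fin.coe_castSucc]
        omega
      simp [hne1]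
    exact div_pos h1 h2
  have projtrans := transP_projM q qpos
  have hLC : ∀ m : Traj X N → ℝ, (∀ (n : Fin (N+1)) (y z : X), transP m n y z ≠ 0) →
      L m = (∑ a : X, ∑ b : X, endMarg q a b *
          ∑ k : Fin N, ∑ y : X, bridgeAt qref k.castSucc.castSucc y a b *
            ∑ z : X, condTrans qref k.castSucc y z b *
              Real.log (condTrans qref k.castSucc y z b))
        - ∑ n : Fin (N+1), ∑ y : X, ∑ z : X,
            pairMarg q n y z * Real.log (transP m n y z) := by
    intro m hm
    rw [hL m]
    have inner : ∀ a b : X, endMarg q a b *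
        ((∑ k : Fin N, ∑ y : X, bridgeAt qref k.castSucc.castSucc y a b *
            KLd (fun z : X => condTrans qref k.castSucc y z b)
                (fun z : X => transP m k.castSucc y z)) -
          ∑ y : X, bridgeAt qref ((Fin.last N).castSucc) y a b *
            Real.log (transP m (Fin.last N) y b))
        = (endMarg q a b * ∑ k : Fin N, ∑ y : X,
              bridgeAt qref k.castSucc.castSucc y a b *
              ∑ z : X, condTrans qref k.castSucc y z b *
                Real.log (condTrans qref k.castSucc y z b))
          - (endMarg q a b * ∑ k : Fin N, ∑ y : X,
              bridgeAt qref k.castSucc.castSucc y a b *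
              ∑ z : X, condTrans qref k.castSucc y z b *
                Real.log (transP m k.castSucc y z))
          - (endMarg q a b * ∑ y : X, bridgeAt qref ((Fin.last N).castSucc) y a b *
              Real.log (transP m (Fin.last N) y b)) := by
      intro a b
      have kl : ∀ (k : Fin N) (y : X),
          bridgeAt qref k.castSucc.castSucc y a b *
            KLd (fun z : X => condTrans qref k.castSucc y z b)
                (fun z : X => transP m k.castSucc y z)
          = bridgeAt qref k.castSucc.castSucc y a b *
              ∑ z : X, condTrans qref k.castSucc y z b *
                Real.log (condTrans qref k.castSucc y z b)
            - bridgeAt qref k.castSucc.castSucc y a b *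
              ∑ z : X, condTrans qref k.castSucc y z b *
                Real.log (transP m k.castSucc y z) := by
        intro k y
        rw [KLd_expand _ _ (fun z => (condpos k y z b).ne') (fun z => hm k.castSucc y z)]
        ring
      rw [Finset.sum_congr rfl fun k _ => Finset.sum_congr rfl fun y _ => kl k y]
      simp only [Finset.sum_sub_distrib]
      ring
    rw [Finset.sum_congr rfl fun a _ => Finset.sum_congr rfl fun b _ => inner a b]
    simp only [Finset.sum_sub_distrib]
    have hT2 : ∑ a : X, ∑ b : X, endMarg q a b * ∑ k : Fin N, ∑ y : X,
          bridgeAt qref k.castSucc.castSucc y a b *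
          ∑ z : X, condTrans qref k.castSucc y z b * Real.log (transP m k.castSucc y z)
        = ∑ k : Fin N, ∑ y : X, ∑ z : X,
            pairMarg q k.castSucc y z * Real.log (transP m k.castSucc y z) := by
      have step1 : ∀ a b : X, endMarg q a b * ∑ k : Fin N, ∑ y : X,
            bridgeAt qref k.castSucc.castSucc y a b *
            ∑ z : X, condTrans qref k.castSucc y z b * Real.log (transP m k.castSucc y z)
          = ∑ k : Fin N, endMarg q a b * ∑ y : X,
              bridgeAt qref k.castSucc.castSucc y a b *
              ∑ z : X, condTrans qref k.castSucc y z b *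
                Real.log (transP m k.castSucc y z) := fun a b => Finset.mul_sum _ _ _
      rw [Finset.sum_congr rfl fun a _ => Finset.sum_congr rfl fun b _ => step1 a b]
      rw [sum_comm3 (fun (a b : X) (k : Fin N) => endMarg q a b * ∑ y : X,
        bridgeAt qref k.castSucc.castSucc y a b *
        ∑ z : X, condTrans qref k.castSucc y z b * Real.log (transP m k.castSucc y z))]
      exact Finset.sum_congr rfl fun k _ =>
        K2w qref q hqrefpos hqrefM hqR hqend k.castSucc
          (fun y z => Real.log (transP m k.castSucc y z))
    have hT3 := K1w qref q hqrefpos hqR hqend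
      (fun y w => Real.log (transP m (Fin.last N) y w))
    rw [hT2, hT3]
    rw [Fin.sum_univ_castSucc (f := fun n : Fin (N+1) => ∑ y : X, ∑ z : X,
      pairMarg q n y z * Real.log (transP m n y z))]
    ring
  have hLproj : L (projM q) = (∑ a : X, ∑ b : X, endMarg q a b *
          ∑ k : Fin N, ∑ y : X, bridgeAt qref k.castSucc.castSucc y a b *
            ∑ z : X, condTrans qref k.castSucc y z b *
              Real.log (condTrans qref k.castSucc y z b))
        - ∑ n : Fin (N+1), ∑ y : X, ∑ z : X,
            pairMarg q n y z * Real.log (transP q n y z) := by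
    rw [hLC (projM q) (fun n y z => by rw [projtrans n y z]; exact (trqpos n y z).ne')]
    simp only [projtrans]
  have hdiff : ∀ m : Traj X N → ℝ, (∀ (n : Fin (N+1)) (y z : X), 0 < transP m n y z) →
      L m = L (projM q) + ∑ n : Fin (N+1), ∑ y : X, timeMarg q n.castSucc y *
        ∑ z : X, transP q n y z * Real.log (transP q n y z / transP m n y z) := by
    intro m hm
    rw [hLC m (fun n y z => (hm n y z).ne'), hLproj]
    have key : ∀ (n : Fin (N+1)) (y : X), timeMarg q n.castSucc y *
        ∑ z : X, transP q n y z * Real.log (transP q n y z / transP m n y z)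
        = (∑ z : X, pairMarg q n y z * Real.log (transP q n y z))
          - ∑ z : X, pairMarg q n y z * Real.log (transP m n y z) := by
      intro n y
      rw [Finset.mul_sum, ← Finset.sum_sub_distrib]
      refine Finset.sum_congr rfl fun z _ => ?_
      rw [Real.log_div (trqpos n y z).ne' (hm n y z).ne']
      have hpair : timeMarg q n.castSucc y * transP q n y z = pairMarg q n y z := by
        unfold transP
        rw [mul_comm, div_mul_cancel₀ _ (tqpos _ y).ne']
      calc timeMarg q n.castSucc y * (transP q n y z *
            (Real.log (transP q n y z) - Real.log (transP m n y z)))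
          = (timeMarg q n.castSucc y * transP q n y z) *
            (Real.log (transP q n y z) - Real.log (transP m n y z)) := by ring
        _ = _ := by rw [hpair]; ring
    rw [Finset.sum_congr rfl fun n _ => Finset.sum_congr rfl fun y _ => key n y]
    simp only [Finset.sum_sub_distrib]
    ring
  have madm : ∀ m : Traj X N → ℝ, IsMarkov m →
      (∀ (n : Fin (N+1)) (y z : X), 0 < transP m n y z) →
      (∀ x, timeMarg m 0 x = timeMarg q 0 x) →
      ∀ (n : Fin (N+1)) (y : X), ∑ z, transP m n y z = 1 := by
    intro m hm2 hm3 hm4 n y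
    have mpos : ∀ ω, 0 < m ω := by
      intro ω
      rw [hm2 ω]
      refine mul_pos ?_ (Finset.prod_pos fun k _ => hm3 _ _ _)
      rw [hm4]
      exact tqpos _ _
    exact sum_transP_eq_one (timeMarg_pos mpos _ y).ne'
  constructor
  · intro m hm1 hm2 hm3 hm4
    rw [hdiff m hm3]
    refine le_add_of_nonneg_right (Finset.sum_nonneg fun n _ =>
      Finset.sum_nonneg fun y _ => mul_nonneg (tqpos _ y).le ?_)
    exact gibbs_nonneg (fun z => trqpos n y z) (fun z => hm3 n y z)
      (sumq1 n y) (madm m hm2 hm3 hm4 n y)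
  · intro m hm1 hm2 hm3 hm4 heq
    rw [hdiff m hm3] at heq
    have hnng : ∀ n : Fin (N+1), ∀ _ : n ∈ Finset.univ,
        0 ≤ ∑ y : X, timeMarg q n.castSucc y *
          ∑ z : X, transP q n y z * Real.log (transP q n y z / transP m n y z) := by
      intro n _
      refine Finset.sum_nonneg fun y _ => mul_nonneg (tqpos _ y).le ?_
      exact gibbs_nonneg (fun z => trqpos n y z) (fun z => hm3 n y z)
        (sumq1 n y) (madm m hm2 hm3 hm4 n y)
    have hext : ∑ n : Fin (N+1), ∑ y : X, timeMarg q n.castSucc y *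
        ∑ z : X, transP q n y z * Real.log (transP q n y z / transP m n y z) = 0 := by
      linarith
    have h1 := (Finset.sum_eq_zero_iff_of_nonneg hnng).1 hext
    have term0 : ∀ (n : Fin (N+1)) (y : X), timeMarg q n.castSucc y *
        ∑ z : X, transP q n y z * Real.log (transP q n y z / transP m n y z) = 0 := by
      intro n y
      have hnng2 : ∀ y : X, ∀ _ : y ∈ Finset.univ,
          0 ≤ timeMarg q n.castSucc y *
            ∑ z : X, transP q n y z * Real.log (transP q n y z / transP m n y z) := by
        intro y _
        refine mul_nonneg (tqpos _ y).le ?_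
        exact gibbs_nonneg (fun z => trqpos n y z) (fun z => hm3 n y z)
          (sumq1 n y) (madm m hm2 hm3 hm4 n y)
      exact (Finset.sum_eq_zero_iff_of_nonneg hnng2).1 (h1 n (Finset.mem_univ n))
        y (Finset.mem_univ y)
    have transEq : ∀ (n : Fin (N+1)) (y z : X), transP m n y z = transP q n y z := by
      intro n y z
      have h3 : ∑ z : X, transP q n y z * Real.log (transP q n y z / transP m n y z) = 0 := by
        rcases mul_eq_zero.1 (term0 n y) with h | h
        · exact absurd h (tqpos _ y).ne'
        · exact h
      exact (gibbs_eq (fun z => trqpos n y z) (fun z => hm3 n y z)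
        (sumq1 n y) (madm m hm2 hm3 hm4 n y) h3 z).symm
    funext ω
    rw [hm2 ω]
    unfold projM
    rw [hm4]
    exact congrArg _ (Finset.prod_congr rfl fun k _ => by rw [transEq])
end
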